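/- Corollary (Kelvin transform preserves α-harmonicity): let u be sufficiently regular on K and α-harmonic on an open set G ⊆ K \ {0} (i.e. (D^{α}u)(x) = 0 for all x ∈ G). Then the Kelvin transform (Ku)(x) = |x|^{α-1} u(1/x) is α-harmonic on the inverted set G* = {1/x : x ∈ G}. -/

import Mathlib

open MeasureTheory Real Metric
open scoped ENNReal NNReal
set_option linter.unusedSectionVars false
set_option linter.unusedVariables false
set_option maxHeartbeats 1000000

namespace KelvinAux


variable {p : ℕ} [hp : Fact p.Prime]

lemma one_lt_p : (1:ℝ) < p := by exact_mod_cast hp.out.one_lt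
lemma p_pos : (0:ℝ) < p := lt_trans one_pos one_lt_p

/-- the closed ball of radius `p^m` -/
def pBall (c : ℚ_[p]) (m : ℤ) : Set ℚ_[p] := Metric.closedBall c ((p:ℝ)^m)

lemma norm_nonarch (a b : ℚ_[p]) : ‖a + b‖ ≤ max ‖a‖ ‖b‖ := Padic.nonarchimedean a b

lemma pBall_mem_iff {c y : ℚ_[p]} {m : ℤ} : y ∈ pBall c m ↔ ‖y - c‖ ≤ (p:ℝ)^m := by
  simp [pBall, Metric.mem_closedBall, dist_eq_norm]

lemma isOpen_pBall (c : ℚ_[p]) (m : ℤ) : IsOpen (pBall c m) :=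
  IsUltrametricDist.isOpen_closedBall c (zpow_pos p_pos m).ne'

lemma measurableSet_pBall [MeasurableSpace ℚ_[p]] [BorelSpace ℚ_[p]] (c : ℚ_[p]) (m : ℤ) :
    MeasurableSet (pBall c m) := measurableSet_closedBall

/-- the family of all `pBall`s -/
def pC (p : ℕ) [Fact p.Prime] : Set (Set ℚ_[p]) := {S | ∃ c m, S = pBall c m}

lemma pBall_subset {c c' : ℚ_[p]} {i j : ℤ} (hij : i ≤ j) (y : ℚ_[p])
    (hy : y ∈ pBall c i ∩ pBall c' j) : pBall c i ⊆ pBall c' j := by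
  rcases hy with ⟨hy1, hy2⟩
  rw [pBall_mem_iff] at hy1 hy2
  intro w hw
  rw [pBall_mem_iff] at hw ⊢
  have h1 : ‖w - y‖ ≤ (p:ℝ)^j := by
    have h := norm_nonarch (w - c) (-(y - c))
    simp only [norm_neg, ← sub_eq_add_neg, sub_sub_sub_cancel_right] at h
    refine h.trans (max_le (hw.trans ?_) (hy1.trans ?_)) <;>
      exact zpow_le_zpow_right₀ one_lt_p.le hij
  have := norm_nonarch (w - y) (y - c')
  simp only [sub_add_sub_cancel] at this
  exact this.trans (max_le h1 hy2)

lemma isPiSystem_pC : IsPiSystem (pC p) := by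
  rintro S ⟨c, i, rfl⟩ T ⟨c', j, rfl⟩ hne
  obtain ⟨y, hy⟩ := hne
  rcases le_total i j with hij | hij
  · have := pBall_subset hij y hy
    rw [Set.inter_eq_self_of_subset_left this]
    exact ⟨c, i, rfl⟩
  · have := pBall_subset hij y ⟨hy.2, hy.1⟩
    rw [Set.inter_eq_self_of_subset_right this]
    exact ⟨c', j, rfl⟩

lemma isBasis_pC : TopologicalSpace.IsTopologicalBasis {S : Set ℚ_[p] | ∃ c m, S = pBall c m} := by
  refine TopologicalSpace.isTopologicalBasis_of_isOpen_of_nhds ?_ ?_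
  · rintro S ⟨c, m, rfl⟩; exact isOpen_pBall c m
  · intro x U hx hU
    obtain ⟨ε, hε, hball⟩ := Metric.isOpen_iff.mp hU x hx
    obtain ⟨n, hn⟩ := exists_pow_lt_of_lt_one hε (by
      rw [inv_lt_one_iff₀]; right; exact one_lt_p (p:=p))
    refine ⟨pBall x (-n), ⟨x, -n, rfl⟩, ?_, ?_⟩
    · rw [pBall_mem_iff]; simp [zpow_nonneg p_pos.le]
    · refine subset_trans ?_ hball
      refine (Metric.closedBall_subset_ball ?_)
      calc ((p:ℝ))^(-(n:ℤ)) = ((p:ℝ)⁻¹)^n := by rw [zpow_neg, ← inv_zpow, zpow_natCast]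
      _ < ε := hn

lemma iUnion_pBall : (⋃ n : ℕ, pBall (0:ℚ_[p]) n) = Set.univ := by
  ext y
  simp only [Set.mem_iUnion, Set.mem_univ, iff_true]
  obtain ⟨n, hn⟩ := pow_unbounded_of_one_lt ‖y‖ (one_lt_p (p:=p))
  exact ⟨n, by rw [pBall_mem_iff]; simpa [zpow_natCast] using hn.le⟩

/-- extensionality for measures on `ℚ_p` via closed balls -/
lemma ext_pBall [MeasurableSpace ℚ_[p]] [BorelSpace ℚ_[p]] (ν₁ ν₂ : Measure ℚ_[p])
    (hfin : ∀ c m, ν₁ (pBall c m) ≠ ⊤)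
    (h : ∀ c m, ν₁ (pBall c m) = ν₂ (pBall c m)) : ν₁ = ν₂ := by
  refine Measure.ext_of_generateFrom_of_iUnion (pC p) (fun n => pBall (0:ℚ_[p]) n)
    ?_ isPiSystem_pC iUnion_pBall (fun n => ⟨0, n, rfl⟩) (fun n => hfin 0 n) ?_
  · rw [BorelSpace.measurable_eq (α := ℚ_[p])]
    exact isBasis_pC.borel_eq_generateFrom
  · rintro S ⟨c, m, rfl⟩; exact h c m


variable [MeasurableSpace ℚ_[p]] [BorelSpace ℚ_[p]] (μ : Measure ℚ_[p]) [μ.IsAddHaarMeasure]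

lemma mu_pBall_center (c : ℚ_[p]) (m : ℤ) : μ (pBall c m) = μ (pBall 0 m) := by
  have h : (fun y => c + y) ⁻¹' (pBall c m) = pBall 0 m := by
    ext y
    simp [pBall_mem_iff, add_sub_cancel_left]
  rw [← h, measure_preimage_add]

lemma norm_natCast_le_one (j : ℕ) : ‖(j : ℚ_[p])‖ ≤ 1 := by
  have := Padic.norm_int_le_one (p := p) (j : ℤ)
  simpa using this

lemma norm_sub_natCast_eq_one {j j' : ℕ} (hj : j < p) (hj' : j' < p) (hne : j ≠ j') :
    ‖(j : ℚ_[p]) - (j' : ℚ_[p])‖ = 1 := by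
  have hcast : (j : ℚ_[p]) - (j' : ℚ_[p]) = (((j : ℤ) - (j' : ℤ) : ℤ) : ℚ_[p]) := by push_cast; ring
  rw [hcast]
  refine le_antisymm (Padic.norm_int_le_one _) ?_
  by_contra hlt
  push_neg at hlt
  have hdvd : (p : ℤ) ∣ ((j : ℤ) - (j' : ℤ)) :=
    Padic.norm_intCast_lt_one_iff.mp hlt
  have : ((j : ℤ) - (j' : ℤ)) = 0 := by
    refine Int.eq_zero_of_abs_lt_dvd hdvd ?_
    rw [abs_sub_lt_iff]
    constructor <;> omega
  have : j = j' := by omega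
  exact hne this

lemma mu_pBall_succ (m : ℤ) : μ (pBall (0:ℚ_[p]) (m+1)) = p * μ (pBall (0:ℚ_[p]) m) := by
  set X : ℚ_[p] := (p:ℚ_[p])^(-(m+1)) with hX
  have hXnorm : ‖X‖ = (p:ℝ)^(m+1) := by rw [hX, Padic.norm_p_zpow, neg_neg]
  have hXne : X ≠ 0 := by
    intro h
    rw [h, norm_zero] at hXnorm
    exact (zpow_pos (p_pos (p := p)) (m+1)).ne' hXnorm.symm
  have hcover : pBall (0:ℚ_[p]) (m+1) = ⋃ j : Fin p, pBall ((j:ℚ_[p]) * X) m := by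
    ext y
    simp only [Set.mem_iUnion, pBall_mem_iff, sub_zero]
    constructor
    · intro hy
      -- t = y / X has norm ≤ 1
      have htnorm : ‖y / X‖ ≤ 1 := by
        rw [norm_div, hXnorm, div_le_one (zpow_pos (p_pos (p:=p)) _)]
        exact hy
      set z : ℤ_[p] := ⟨y / X, htnorm⟩ with hz
      refine ⟨⟨z.appr 1, by simpa using z.appr_lt 1⟩, ?_⟩
      have hspec := z.appr_spec 1
      rw [Ideal.mem_span_singleton] at hspec
      obtain ⟨w, hw⟩ := hspec
      have hnorm1 : ‖z - (z.appr 1 : ℤ_[p])‖ ≤ (p:ℝ)⁻¹ := by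
        rw [hw]
        calc ‖(p:ℤ_[p])^1 * w‖ ≤ ‖(p:ℤ_[p])^1‖ * ‖w‖ := norm_mul_le _ _
        _ ≤ (p:ℝ)⁻¹ * 1 := by
            refine mul_le_mul ?_ w.norm_le_one (norm_nonneg _) (by positivity)
            simp [PadicInt.norm_p]
        _ = (p:ℝ)⁻¹ := mul_one _
      have hyd : y - ((z.appr 1 : ℕ) : ℚ_[p]) * X = X * ((z : ℚ_[p]) - (z.appr 1 : ℕ)) := by
        rw [hz]
        push_cast
        field_simp
      simp only [Fin.val_mk]
      rw [hyd, norm_mul, hXnorm]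
      have : ‖(z : ℚ_[p]) - ((z.appr 1 : ℕ) : ℚ_[p])‖ ≤ (p:ℝ)⁻¹ := by
        have h2 : ((z - (z.appr 1 : ℤ_[p]) : ℤ_[p]) : ℚ_[p]) = (z : ℚ_[p]) - ((z.appr 1 : ℕ) : ℚ_[p]) := by
          push_cast
          ring
        rw [← h2, ← PadicInt.norm_def]
        exact hnorm1
      calc (p:ℝ)^(m+1) * ‖(z : ℚ_[p]) - ((z.appr 1 : ℕ) : ℚ_[p])‖
          ≤ (p:ℝ)^(m+1) * (p:ℝ)⁻¹ := by
            exact mul_le_mul_of_nonneg_left this (by positivity)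
        _ = (p:ℝ)^m := by
            rw [← zpow_neg_one, ← zpow_add₀ (p_pos (p:=p)).ne']
            ring_nf
    · rintro ⟨j, hj⟩
      have hc : ‖(j:ℚ_[p]) * X‖ ≤ (p:ℝ)^(m+1) := by
        rw [norm_mul, hXnorm]
        calc ‖((j:ℕ):ℚ_[p])‖ * (p:ℝ)^(m+1) ≤ 1 * (p:ℝ)^(m+1) := by
              exact mul_le_mul_of_nonneg_right (norm_natCast_le_one _) (by positivity)
        _ = (p:ℝ)^(m+1) := one_mul _
      have h1 : ‖y‖ ≤ max ‖y - (j:ℚ_[p]) * X‖ ‖(j:ℚ_[p]) * X‖ := by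
        have := norm_nonarch (y - (j:ℚ_[p]) * X) ((j:ℚ_[p]) * X)
        simpa using this
      refine h1.trans (max_le (hj.trans ?_) hc)
      exact zpow_le_zpow_right₀ (one_lt_p (p:=p)).le (by omega)
  have hdisj : Pairwise (Function.onFun Disjoint fun j : Fin p => pBall ((j:ℚ_[p]) * X) m) := by
    intro j j' hne
    rw [Function.onFun, Set.disjoint_left]
    intro y hy hy'
    rw [pBall_mem_iff] at hy hy'
    have hd : ‖(j:ℚ_[p]) * X - (j':ℚ_[p]) * X‖ ≤ (p:ℝ)^m := by
      have h := norm_nonarch ((j:ℚ_[p]) * X - y) (y - (j':ℚ_[p]) * X)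
      simp only [sub_add_sub_cancel] at h
      refine h.trans (max_le ?_ hy')
      rw [← norm_neg]
      simpa using hy
    have heq : ‖(j:ℚ_[p]) * X - (j':ℚ_[p]) * X‖ = (p:ℝ)^(m+1) := by
      rw [← sub_mul, norm_mul, hXnorm,
        norm_sub_natCast_eq_one j.2 j'.2 (fun h => hne (Fin.ext h)), one_mul]
    rw [heq] at hd
    have := zpow_lt_zpow_right₀ (one_lt_p (p:=p)) (lt_add_one m)
    exact absurd hd (not_le.mpr this)
  rw [hcover, measure_iUnion hdisj (fun j => measurableSet_pBall _ _)]
  simp only [mu_pBall_center μ, tsum_fintype, Finset.sum_const, Finset.card_univ,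
    Fintype.card_fin, nsmul_eq_mul]

lemma mu_pBall (hμ : μ (closedBall (0:ℚ_[p]) 1) = 1) (m : ℤ) :
    μ (pBall (0:ℚ_[p]) m) = ENNReal.ofReal ((p:ℝ)^m) := by
  have hpe0 : ((p:ℝ≥0∞)) ≠ 0 := by
    simp [Nat.pos_of_ne_zero, hp.out.ne_zero]
  have hpet : ((p:ℝ≥0∞)) ≠ ⊤ := ENNReal.natCast_ne_top p
  have hofp : (p:ℝ≥0∞) = ENNReal.ofReal (p:ℝ) := by
    rw [ENNReal.ofReal_natCast]
  induction m using Int.induction_on with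
  | zero => simpa [pBall] using hμ
  | succ n ih =>
      rw [mu_pBall_succ μ, ih, hofp, ← ENNReal.ofReal_mul (p_pos (p:=p)).le]
      congr 1
      rw [zpow_add₀ (p_pos (p:=p)).ne', zpow_one]
      ring
  | pred n ih =>
      have hrec := mu_pBall_succ μ (-(n+1) : ℤ)
      have hl : (-(n+1) : ℤ) + 1 = -(n:ℤ) := by ring
      rw [hl, ih] at hrec
      have : μ (pBall (0:ℚ_[p]) (-(n+1):ℤ)) =
          (p:ℝ≥0∞)⁻¹ * ENNReal.ofReal ((p:ℝ)^(-(n:ℤ))) := by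
        rw [hrec, ← mul_assoc, ENNReal.inv_mul_cancel hpe0 hpet, one_mul]
      have hgl : (-(n:ℤ) - 1) = (-(n+1) : ℤ) := by ring
      rw [hgl, this, hofp, ← ENNReal.ofReal_inv_of_pos (p_pos (p:=p)),
        ← ENNReal.ofReal_mul (by positivity)]
      congr 1
      rw [← zpow_neg_one, ← zpow_add₀ (p_pos (p:=p)).ne']
      congr 1
      push_cast
      ring

lemma mu_pBall' (hμ : μ (closedBall (0:ℚ_[p]) 1) = 1) (c : ℚ_[p]) (m : ℤ) :
    μ (pBall c m) = ENNReal.ofReal ((p:ℝ)^m) := by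
  rw [mu_pBall_center, mu_pBall μ hμ]

lemma mu_pBall_ne_top (hμ : μ (closedBall (0:ℚ_[p]) 1) = 1) (c : ℚ_[p]) (m : ℤ) :
    μ (pBall c m) ≠ ⊤ := by
  rw [mu_pBall' μ hμ]
  exact ENNReal.ofReal_ne_top

lemma mu_singleton_zero (hμ : μ (closedBall (0:ℚ_[p]) 1) = 1) : μ ({0} : Set ℚ_[p]) = 0 := by
  refine le_antisymm ?_ zero_le
  have hb : ∀ n : ℕ, μ ({0} : Set ℚ_[p]) ≤ ENNReal.ofReal ((p:ℝ)^(-(n:ℤ))) := by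
    intro n
    rw [← mu_pBall μ hμ]
    refine measure_mono ?_
    intro y hy
    simp only [Set.mem_singleton_iff] at hy
    rw [pBall_mem_iff, hy]
    simp [zpow_nonneg (p_pos (p:=p)).le]
  have htend : Filter.Tendsto (fun n : ℕ => ENNReal.ofReal ((p:ℝ)^(-(n:ℤ))))
      Filter.atTop (nhds 0) := by
    have : Filter.Tendsto (fun n : ℕ => ((p:ℝ)⁻¹)^n) Filter.atTop (nhds 0) :=
      tendsto_pow_atTop_nhds_zero_of_lt_one (by positivity)
        (by rw [inv_lt_one_iff₀]; right; exact one_lt_p (p:=p))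
    have h2 := (ENNReal.tendsto_ofReal (f := Filter.atTop) this)
    rw [ENNReal.ofReal_zero] at h2
    convert h2 using 2 with n
    rw [zpow_neg, ← inv_zpow, zpow_natCast]
  exact ge_of_tendsto' htend hb

/-- the sphere of radius `p^m` -/
def pSph (p : ℕ) [Fact p.Prime] (m : ℤ) : Set ℚ_[p] := {y : ℚ_[p] | ‖y‖ = (p:ℝ)^m}

lemma measurableSet_pSph (m : ℤ) : MeasurableSet (pSph p m) :=
  measurableSet_eq_fun (continuous_norm.measurable) measurable_const

lemma norm_eq_zpow_of_ne_zero {y : ℚ_[p]} (hy : y ≠ 0) : ∃ m : ℤ, ‖y‖ = (p:ℝ)^m :=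
  ⟨-y.valuation, Padic.norm_eq_zpow_neg_valuation hy⟩

lemma pSph_eq_diff (m : ℤ) : pSph p m = pBall (0:ℚ_[p]) m \ pBall (0:ℚ_[p]) (m-1) := by
  ext y
  simp only [pSph, Set.mem_setOf_eq, Set.mem_diff, pBall_mem_iff, sub_zero, not_le]
  constructor
  · intro h
    rw [h]
    exact ⟨le_refl _, zpow_lt_zpow_right₀ (one_lt_p (p:=p)) (by omega)⟩
  · rintro ⟨h1, h2⟩
    have hy : y ≠ 0 := by
      intro h
      rw [h, norm_zero] at h2
      exact absurd h2 (not_lt.mpr (zpow_nonneg (p_pos (p:=p)).le _))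
    obtain ⟨k, hk⟩ := norm_eq_zpow_of_ne_zero hy
    rw [hk] at h1 h2 ⊢
    congr 1
    have hk1 : k ≤ m := by
      by_contra hc
      push_neg at hc
      exact absurd h1 (not_le.mpr (zpow_lt_zpow_right₀ (one_lt_p (p:=p)) hc))
    have hk2 : m - 1 < k := by
      by_contra hc
      push_neg at hc
      exact absurd h2 (not_lt.mpr (zpow_le_zpow_right₀ (one_lt_p (p:=p)).le hc))
    omega

lemma mu_pSph (hμ : μ (closedBall (0:ℚ_[p]) 1) = 1) (m : ℤ) :
    μ (pSph p m) = ENNReal.ofReal ((p:ℝ)^m - (p:ℝ)^(m-1)) := by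
  rw [pSph_eq_diff, measure_diff ?_ ?_ (mu_pBall_ne_top μ hμ 0 (m-1))]
  · rw [mu_pBall μ hμ, mu_pBall μ hμ,
      ENNReal.ofReal_sub _ (zpow_nonneg (p_pos (p:=p)).le _)]
  · intro y hy
    rw [pBall_mem_iff] at hy ⊢
    exact hy.trans (zpow_le_zpow_right₀ (one_lt_p (p:=p)).le (by omega))
  · exact (measurableSet_pBall 0 (m-1)).nullMeasurableSet


section norms
lemma norm_eq_of_sub_le {y c : ℚ_[p]} (hc : c ≠ 0) (h : ‖y - c‖ < ‖c‖) : ‖y‖ = ‖c‖ := by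
  have hne : ‖y - c‖ ≠ ‖c‖ := ne_of_lt h
  have := Padic.add_eq_max_of_ne (q := y - c) (r := c) hne
  rw [sub_add_cancel] at this
  rw [this, max_eq_right h.le]

lemma norm_inv_sub_inv {a b : ℚ_[p]} (ha : a ≠ 0) (hb : b ≠ 0) :
    ‖a⁻¹ - b⁻¹‖ = ‖a‖⁻¹ * ‖b‖⁻¹ * ‖a - b‖ := by
  have key : a⁻¹ - b⁻¹ = a⁻¹ * b⁻¹ * (b - a) := by field_simp
  rw [key, norm_mul, norm_mul, norm_inv, norm_inv, norm_sub_rev]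
end norms

variable [MeasurableSpace ℚ_[p]] [BorelSpace ℚ_[p]] (μ : Measure ℚ_[p]) [μ.IsAddHaarMeasure]

/-! ### Scaling -/

lemma preimage_mul_pBall {a : ℚ_[p]} (ha : a ≠ 0) {v : ℤ} (hv : ‖a‖ = (p:ℝ)^v)
    (c : ℚ_[p]) (m : ℤ) :
    (fun y => a * y) ⁻¹' (pBall c m) = pBall (a⁻¹ * c) (m - v) := by
  ext y
  simp only [Set.mem_preimage, pBall_mem_iff]
  have key : a * y - c = a * (y - a⁻¹ * c) := by
    field_simp
  rw [key, norm_mul, hv, ← le_div_iff₀' (zpow_pos (p_pos (p:=p)) v),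
    ← zpow_sub₀ (p_pos (p:=p)).ne']

lemma map_mul_left (hμ : μ (closedBall (0:ℚ_[p]) 1) = 1) {a : ℚ_[p]} (ha : a ≠ 0) :
    μ.map (fun y => a * y) = (ENNReal.ofReal ‖a‖)⁻¹ • μ := by
  obtain ⟨v, hv⟩ := norm_eq_zpow_of_ne_zero ha
  have heq : ∀ c m, (μ.map (fun y => a * y)) (pBall c m) = ENNReal.ofReal ((p:ℝ)^(m-v)) := by
    intro c m
    rw [Measure.map_apply (measurable_const_mul a) (measurableSet_pBall c m),
      preimage_mul_pBall ha hv, mu_pBall' μ hμ]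
  refine ext_pBall _ _ (fun c m => by rw [heq c m]; exact ENNReal.ofReal_ne_top) ?_
  intro c m
  rw [heq c m, Measure.smul_apply, smul_eq_mul, mu_pBall' μ hμ, hv,
    ← ENNReal.ofReal_inv_of_pos (zpow_pos (p_pos (p:=p)) v),
    ← ENNReal.ofReal_mul (by positivity)]
  congr 1
  rw [← zpow_neg, ← zpow_add₀ (p_pos (p:=p)).ne']
  congr 1
  ring

variable {E : Type*} [NormedAddCommGroup E] [NormedSpace ℝ E]

lemma integral_scale (hμ : μ (closedBall (0:ℚ_[p]) 1) = 1) {a : ℚ_[p]} (ha : a ≠ 0)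
    {f : ℚ_[p] → E} (hf : AEStronglyMeasurable f μ) :
    ∫ y, f (a * y) ∂μ = ‖a‖⁻¹ • ∫ y, f y ∂μ := by
  have hmap := map_mul_left μ hμ ha
  have hf' : AEStronglyMeasurable f (μ.map (fun y => a * y)) := by
    rw [hmap]
    exact hf.mono_ac Measure.smul_absolutelyContinuous
  have h1 := integral_map (μ := μ) (φ := fun y => a * y)
    (measurable_const_mul a).aemeasurable hf'
  rw [hmap, integral_smul_measure] at h1
  rw [← h1]
  congr 1
  rw [ENNReal.toReal_inv, ENNReal.toReal_ofReal (norm_nonneg a)]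

lemma integrable_scale (hμ : μ (closedBall (0:ℚ_[p]) 1) = 1) {a : ℚ_[p]} (ha : a ≠ 0)
    {f : ℚ_[p] → E} (hf : AEStronglyMeasurable f μ) (hif : Integrable f μ) :
    Integrable (fun y => f (a * y)) μ := by
  have hmap := map_mul_left μ hμ ha
  have hf' : AEStronglyMeasurable f (μ.map (fun y => a * y)) := by
    rw [hmap]
    exact hf.mono_ac Measure.smul_absolutelyContinuous
  have h0 : (ENNReal.ofReal ‖a‖)⁻¹ ≠ 0 := by
    simp only [ne_eq, ENNReal.inv_eq_zero]
    exact ENNReal.ofReal_ne_top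
  have ht : (ENNReal.ofReal ‖a‖)⁻¹ ≠ ⊤ := by
    simp only [ne_eq, ENNReal.inv_eq_top, ENNReal.ofReal_eq_zero, not_le]
    exact norm_pos_iff.mpr ha
  have h2 := integrable_map_measure hf' (measurable_const_mul a).aemeasurable
  rw [hmap, integrable_smul_measure h0 ht] at h2
  exact h2.mp hif

/-! ### Inversion -/

/-- the density `‖w‖⁻²` -/
noncomputable def rho (p : ℕ) [Fact p.Prime] : ℚ_[p] → ℝ≥0 := fun w => ((‖w‖^(2:ℕ))⁻¹).toNNReal

lemma measurable_rho : Measurable (rho p) :=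
  ((measurable_norm.pow_const 2).inv).real_toNNReal

lemma rho_coe (w : ℚ_[p]) : ((rho p w : ℝ≥0) : ℝ) = (‖w‖^(2:ℕ))⁻¹ :=
  Real.coe_toNNReal _ (by positivity)

lemma rho_coe_ennreal (w : ℚ_[p]) : ((rho p w : ℝ≥0) : ℝ≥0∞) = ENNReal.ofReal ((‖w‖^(2:ℕ))⁻¹) :=
  rfl

/-- the measure `‖w‖⁻² dμ(w)` -/
noncomputable def nu (μ : Measure ℚ_[p]) : Measure ℚ_[p] :=
  μ.withDensity (fun w => ((rho p w : ℝ≥0) : ℝ≥0∞))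

lemma nu_apply {S : Set ℚ_[p]} (hS : MeasurableSet S) :
    nu μ S = ∫⁻ w in S, ((rho p w : ℝ≥0) : ℝ≥0∞) ∂μ := withDensity_apply _ hS

lemma nu_const_on {S : Set ℚ_[p]} (hS : MeasurableSet S) {k : ℤ} (hsub : S ⊆ pSph p k) :
    nu μ S = ENNReal.ofReal ((p:ℝ)^(-2*k)) * μ S := by
  rw [nu_apply μ hS]
  rw [setLIntegral_congr_fun hS
    (fun w hw => ?_), setLIntegral_const]
  have : ‖w‖ = (p:ℝ)^k := hsub hw
  rw [rho_coe_ennreal, this]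
  congr 1
  rw [← zpow_natCast ((p:ℝ)^k), ← zpow_mul, ← zpow_neg]
  congr 1
  ring

lemma inv_preimage_pBall_nonzero {c : ℚ_[p]} {m k : ℤ} (hc : ‖c‖ = (p:ℝ)^k) (hmk : m < k) :
    (fun y : ℚ_[p] => y⁻¹) ⁻¹' (pBall c m) = pBall c⁻¹ (m - 2*k) := by
  have hc0 : c ≠ 0 := by
    intro h; rw [h, norm_zero] at hc; exact (zpow_pos (p_pos (p:=p)) k).ne' hc.symm
  have hmklt : ((p:ℝ))^m < (p:ℝ)^k := zpow_lt_zpow_right₀ (one_lt_p (p:=p)) hmk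
  have hcinv : ‖c⁻¹‖ = (p:ℝ)^(-k) := by rw [norm_inv, hc, zpow_neg]
  have hppos : (0:ℝ) < (p:ℝ)^k := zpow_pos (p_pos (p:=p)) k
  have key : ∀ y : ℚ_[p], y ≠ 0 → ‖y‖ = (p:ℝ)^(-k) →
      ‖y⁻¹ - c‖ = (p:ℝ)^(2*k) * ‖y - c⁻¹‖ := by
    intro y hy0 hyn
    have h2 := norm_inv_sub_inv hy0 (inv_ne_zero hc0)
    rw [inv_inv] at h2
    rw [h2, hyn, hcinv, zpow_neg, inv_inv, ← zpow_add₀ (p_pos (p:=p)).ne', two_mul]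
  ext y
  simp only [Set.mem_preimage, pBall_mem_iff]
  constructor
  · intro hy
    have hy0 : y ≠ 0 := by
      intro h
      rw [h, inv_zero, zero_sub, norm_neg, hc] at hy
      exact absurd hy (not_le.mpr hmklt)
    have hyinv : ‖y⁻¹‖ = (p:ℝ)^k := by
      rw [← hc]
      exact norm_eq_of_sub_le hc0 (by rw [hc]; exact lt_of_le_of_lt hy hmklt)
    have hyn : ‖y‖ = (p:ℝ)^(-k) := by
      rw [← inv_inv y, norm_inv, hyinv, zpow_neg]
    have hkey := key y hy0 hyn
    have : (p:ℝ)^(2*k) * ‖y - c⁻¹‖ ≤ (p:ℝ)^m := by rw [← hkey]; exact hy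
    calc ‖y - c⁻¹‖ = ((p:ℝ)^(2*k))⁻¹ * ((p:ℝ)^(2*k) * ‖y - c⁻¹‖) := by
          rw [← mul_assoc, inv_mul_cancel₀ (zpow_pos (p_pos (p:=p)) _).ne', one_mul]
    _ ≤ ((p:ℝ)^(2*k))⁻¹ * (p:ℝ)^m := mul_le_mul_of_nonneg_left this (by positivity)
    _ = (p:ℝ)^(m - 2*k) := by
          rw [← zpow_neg, ← zpow_add₀ (p_pos (p:=p)).ne']
          congr 1
          ring
  · intro hy
    have hlt : (p:ℝ)^(m - 2*k) < ‖c⁻¹‖ := by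
      rw [hcinv]
      exact zpow_lt_zpow_right₀ (one_lt_p (p:=p)) (by omega)
    have hy0 : y ≠ 0 := by
      intro h
      rw [h, zero_sub, norm_neg] at hy
      exact absurd hy (not_le.mpr hlt)
    have hyn : ‖y‖ = (p:ℝ)^(-k) := by
      rw [← hcinv]
      exact norm_eq_of_sub_le (inv_ne_zero hc0) (lt_of_le_of_lt hy hlt)
    rw [key y hy0 hyn]
    calc (p:ℝ)^(2*k) * ‖y - c⁻¹‖ ≤ (p:ℝ)^(2*k) * (p:ℝ)^(m - 2*k) :=
          mul_le_mul_of_nonneg_left hy (by positivity)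
    _ = (p:ℝ)^m := by
          rw [← zpow_add₀ (p_pos (p:=p)).ne']
          congr 1
          ring

lemma zpow_inj_p : Function.Injective (fun n : ℤ => (p:ℝ)^n) :=
  (zpow_right_strictMono₀ (one_lt_p (p:=p))).injective

lemma nu_pSph (hμ : μ (closedBall (0:ℚ_[p]) 1) = 1) (j : ℤ) :
    nu μ (pSph p j) = μ (pSph p (-j)) := by
  rw [nu_const_on μ (measurableSet_pSph j) (subset_refl _), mu_pSph μ hμ, mu_pSph μ hμ,
    ← ENNReal.ofReal_mul (zpow_pos (p_pos (p:=p)) _).le]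
  congr 1
  rw [mul_sub, ← zpow_add₀ (p_pos (p:=p)).ne', ← zpow_add₀ (p_pos (p:=p)).ne']
  congr 2 <;> ring

lemma pBall_zero_eq (m : ℤ) :
    pBall (0:ℚ_[p]) m = {0} ∪ ⋃ n : ℕ, pSph p (m - n) := by
  ext y
  simp only [pBall_mem_iff, sub_zero, Set.mem_union, Set.mem_singleton_iff, Set.mem_iUnion,
    pSph, Set.mem_setOf_eq]
  constructor
  · intro hy
    by_cases hy0 : y = 0
    · exact Or.inl hy0
    · obtain ⟨j, hj⟩ := norm_eq_zpow_of_ne_zero hy0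
      right
      have hjm : j ≤ m := by
        by_contra hc
        push_neg at hc
        rw [hj] at hy
        exact absurd hy (not_le.mpr (zpow_lt_zpow_right₀ (one_lt_p (p:=p)) hc))
      exact ⟨(m - j).toNat, by rw [hj]; congr 1; omega⟩
  · rintro (rfl | ⟨n, hn⟩)
    · simp [zpow_nonneg (p_pos (p:=p)).le]
    · rw [hn]
      exact zpow_le_zpow_right₀ (one_lt_p (p:=p)).le (by omega)

lemma disjoint_zero_sph (g : ℕ → ℤ) :
    Disjoint ({(0:ℚ_[p])} : Set ℚ_[p]) (⋃ n : ℕ, pSph p (g n)) := by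
  rw [Set.disjoint_left]
  rintro y rfl
  simp only [Set.mem_iUnion, pSph, Set.mem_setOf_eq, norm_zero]
  rintro ⟨n, hn⟩
  exact (zpow_pos (p_pos (p:=p)) _).ne' hn.symm

lemma pairwise_disjoint_sph (g : ℕ → ℤ) (hg : Function.Injective g) :
    Pairwise (Function.onFun Disjoint fun n : ℕ => pSph p (g n)) := by
  intro n n' hne
  rw [Function.onFun, Set.disjoint_left]
  intro y hy hy'
  simp only [pSph, Set.mem_setOf_eq] at hy hy'
  have : (p:ℝ)^(g n) = (p:ℝ)^(g n') := by rw [← hy, hy']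
  exact hne (hg (zpow_inj_p (p:=p) this))

lemma measure_pBall_zero_sum (ν : Measure ℚ_[p]) (m : ℤ) :
    ν (pBall (0:ℚ_[p]) m) = ν {0} + ∑' n : ℕ, ν (pSph p (m - n)) := by
  rw [pBall_zero_eq,
    measure_union (disjoint_zero_sph _) (MeasurableSet.iUnion fun n => measurableSet_pSph _),
    measure_iUnion (pairwise_disjoint_sph _ (fun a b h => by omega))
      (fun n => measurableSet_pSph _)]

lemma inv_preimage_pBall_zero (m : ℤ) :
    (fun y : ℚ_[p] => y⁻¹) ⁻¹' (pBall (0:ℚ_[p]) m) = {0} ∪ ⋃ n : ℕ, pSph p (-m + n) := by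
  ext y
  simp only [Set.mem_preimage, pBall_mem_iff, sub_zero, Set.mem_union, Set.mem_singleton_iff,
    Set.mem_iUnion, pSph, Set.mem_setOf_eq]
  constructor
  · intro hy
    by_cases hy0 : y = 0
    · exact Or.inl hy0
    · obtain ⟨j, hj⟩ := norm_eq_zpow_of_ne_zero hy0
      right
      have hjinv : ‖y⁻¹‖ = (p:ℝ)^(-j) := by rw [norm_inv, hj, zpow_neg]
      have hjm : -j ≤ m := by
        by_contra hc
        push_neg at hc
        rw [hjinv] at hy
        exact absurd hy (not_le.mpr (zpow_lt_zpow_right₀ (one_lt_p (p:=p)) hc))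
      exact ⟨(j + m).toNat, by rw [hj]; congr 1; omega⟩
  · rintro (rfl | ⟨n, hn⟩)
    · simp [zpow_nonneg (p_pos (p:=p)).le]
    · have hy0 : y ≠ 0 := by
        intro h
        rw [h, norm_zero] at hn
        exact (zpow_pos (p_pos (p:=p)) _).ne' hn.symm
      rw [norm_inv, hn, ← zpow_neg]
      exact zpow_le_zpow_right₀ (one_lt_p (p:=p)).le (by omega)

lemma nu_singleton_zero (hμ : μ (closedBall (0:ℚ_[p]) 1) = 1) : nu μ ({0} : Set ℚ_[p]) = 0 := by
  rw [nu_apply μ (measurableSet_singleton 0),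
    setLIntegral_measure_zero _ _ (mu_singleton_zero μ hμ)]

/-- the key change of variables: pushing forward `‖w‖⁻² dμ(w)` under inversion gives back `μ` -/
lemma map_inv_nu (hμ : μ (closedBall (0:ℚ_[p]) 1) = 1) :
    (nu μ).map (fun y : ℚ_[p] => y⁻¹) = μ := by
  have heq : ∀ c m, ((nu μ).map (fun y : ℚ_[p] => y⁻¹)) (pBall c m) = μ (pBall c m) := by
    intro c m
    rw [Measure.map_apply measurable_inv (measurableSet_pBall c m)]
    by_cases hc : (p:ℝ)^m < ‖c‖
    · have hc0 : c ≠ 0 := by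
        intro h
        rw [h, norm_zero] at hc
        exact absurd hc (not_lt.mpr (zpow_pos (p_pos (p:=p)) m).le)
      obtain ⟨k, hk⟩ := norm_eq_zpow_of_ne_zero hc0
      have hmk : m < k := by
        rw [hk] at hc
        by_contra h
        push_neg at h
        exact absurd hc (not_lt.mpr (zpow_le_zpow_right₀ (one_lt_p (p:=p)).le h))
      rw [inv_preimage_pBall_nonzero hk hmk]
      have hsub : pBall c⁻¹ (m - 2*k) ⊆ pSph p (-k) := by
        intro w hw
        rw [pBall_mem_iff] at hw
        have hcinv : ‖c⁻¹‖ = (p:ℝ)^(-k) := by rw [norm_inv, hk, zpow_neg]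
        have hlt : (p:ℝ)^(m - 2*k) < ‖c⁻¹‖ := by
          rw [hcinv]
          exact zpow_lt_zpow_right₀ (one_lt_p (p:=p)) (by omega)
        have h3 := norm_eq_of_sub_le (inv_ne_zero hc0) (lt_of_le_of_lt hw hlt)
        show ‖w‖ = (p:ℝ)^(-k)
        rw [h3, hcinv]
      rw [nu_const_on μ (measurableSet_pBall _ _) hsub, mu_pBall' μ hμ, mu_pBall' μ hμ,
        ← ENNReal.ofReal_mul (zpow_pos (p_pos (p:=p)) _).le]
      congr 1
      rw [← zpow_add₀ (p_pos (p:=p)).ne']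
      congr 1
      ring
    · push_neg at hc
      have hball : pBall c m = pBall (0:ℚ_[p]) m := by
        have h0 : (0:ℚ_[p]) ∈ Metric.closedBall c ((p:ℝ)^m) := by
          rw [Metric.mem_closedBall, dist_eq_norm, zero_sub, norm_neg]
          exact hc
        have := IsUltrametricDist.closedBall_eq_of_mem h0
        exact this
      rw [hball, inv_preimage_pBall_zero,
        measure_union (disjoint_zero_sph _) (MeasurableSet.iUnion fun n => measurableSet_pSph _),
        measure_iUnion (pairwise_disjoint_sph _ (fun a b h => by omega))
          (fun n => measurableSet_pSph _),
        nu_singleton_zero μ hμ, zero_add,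
        measure_pBall_zero_sum μ m, mu_singleton_zero μ hμ, zero_add]
      congr 1
      funext n
      rw [nu_pSph μ hμ]
      congr 2
      ring
  refine ext_pBall _ _ (fun c m => ?_) heq
  rw [heq c m, mu_pBall' μ hμ]
  exact ENNReal.ofReal_ne_top

lemma integral_inv_change (hμ : μ (closedBall (0:ℚ_[p]) 1) = 1)
    {f : ℚ_[p] → E} (hf : AEStronglyMeasurable f μ) :
    ∫ y, f y ∂μ = ∫ w, (rho p w : ℝ≥0) • f w⁻¹ ∂μ := by
  conv_lhs => rw [← map_inv_nu μ hμ]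
  rw [integral_map measurable_inv.aemeasurable (by rw [map_inv_nu μ hμ]; exact hf)]
  exact integral_withDensity_eq_integral_smul (measurable_rho (p:=p)) _

/-! ### radial integrability -/

lemma lintegral_rpow_pSph (hμ : μ (closedBall (0:ℚ_[p]) 1) = 1) (β : ℝ) (j : ℤ) :
    ∫⁻ y in pSph p j, ENNReal.ofReal (‖y‖ ^ β) ∂μ
      = ENNReal.ofReal (((p:ℝ)^j) ^ β * ((p:ℝ)^j - (p:ℝ)^(j-1))) := by
  rw [setLIntegral_congr_fun (measurableSet_pSph j)
    (fun y hy => ?_), setLIntegral_const, mu_pSph μ hμ,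
    ← ENNReal.ofReal_mul (Real.rpow_nonneg (zpow_pos (p_pos (p:=p)) j).le β)]
  show ENNReal.ofReal (‖y‖ ^ β) = ENNReal.ofReal (((p:ℝ)^j) ^ β)
  rw [(hy : ‖y‖ = (p:ℝ)^j)]

lemma rpow_term_bound (β : ℝ) (j : ℤ) :
    ((p:ℝ)^j) ^ β * ((p:ℝ)^j - (p:ℝ)^(j-1)) ≤ ((p:ℝ)^j) ^ (β+1) := by
  have hpj : (0:ℝ) < (p:ℝ)^j := zpow_pos (p_pos (p:=p)) j
  calc ((p:ℝ)^j) ^ β * ((p:ℝ)^j - (p:ℝ)^(j-1))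
      ≤ ((p:ℝ)^j) ^ β * (p:ℝ)^j := by
        refine mul_le_mul_of_nonneg_left ?_ (Real.rpow_nonneg hpj.le β)
        refine sub_le_self _ (zpow_pos (p_pos (p:=p)) _).le
  _ = ((p:ℝ)^j) ^ (β+1) := by
        rw [Real.rpow_add_one hpj.ne']

lemma rpow_zpow_eq (β : ℝ) (j : ℤ) :
    ((p:ℝ)^j) ^ β = (p:ℝ) ^ ((j:ℝ) * β) := by
  rw [Real.rpow_mul (p_pos (p:=p)).le, Real.rpow_intCast]

/-- geometric bound: if `r < 1` then `∑' n, ofReal (r^(n+1)) < ⊤` -/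
lemma tsum_ofReal_geom_lt_top {r : ℝ} (hr0 : 0 ≤ r) (hr1 : r < 1) :
    ∑' n : ℕ, ENNReal.ofReal (r ^ (n+1 : ℕ)) < ⊤ := by
  have h1 : ∀ n : ℕ, ENNReal.ofReal (r ^ (n+1:ℕ)) = (ENNReal.ofReal r) ^ (n+1:ℕ) := by
    intro n
    rw [ENNReal.ofReal_pow hr0]
  calc ∑' n : ℕ, ENNReal.ofReal (r ^ (n+1:ℕ))
      ≤ ∑' n : ℕ, (ENNReal.ofReal r) ^ (n:ℕ) := by
        refine ENNReal.tsum_le_tsum (fun n => ?_)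
        rw [h1 n]
        calc (ENNReal.ofReal r) ^ (n+1:ℕ) = (ENNReal.ofReal r) ^ n * ENNReal.ofReal r :=
              pow_succ _ n
        _ ≤ (ENNReal.ofReal r) ^ n * 1 := by
              gcongr
              exact ENNReal.ofReal_le_one.mpr hr1.le
        _ = (ENNReal.ofReal r) ^ n := mul_one _
  _ = (1 - ENNReal.ofReal r)⁻¹ := ENNReal.tsum_geometric _
  _ < ⊤ := by
        rw [ENNReal.inv_lt_top]
        refine tsub_pos_of_lt ?_
        exact ENNReal.ofReal_lt_one.mpr hr1

lemma hasFiniteIntegral_of_sph_sum {S : Set ℚ_[p]} (g : ℕ → ℤ) (hg : Function.Injective g)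
    (hS : S = ⋃ n : ℕ, pSph p (g n)) {β : ℝ} {r : ℝ} (hr0 : 0 ≤ r) (hr1 : r < 1)
    (hbound : ∀ n : ℕ, ((p:ℝ)^(g n)) ^ (β + 1) ≤ r ^ (n+1:ℕ))
    (hμ : μ (closedBall (0:ℚ_[p]) 1) = 1) :
    HasFiniteIntegral (fun y : ℚ_[p] => ‖y‖ ^ β) (μ.restrict S) := by
  rw [HasFiniteIntegral]
  have hcong : ∀ y : ℚ_[p], ‖‖y‖ ^ β‖ₑ = ENNReal.ofReal (‖y‖ ^ β) := by
    intro y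
    rw [← Real.enorm_eq_ofReal (Real.rpow_nonneg (norm_nonneg y) β)]
  calc ∫⁻ y in S, ‖‖y‖ ^ β‖ₑ ∂μ
      = ∫⁻ y in S, ENNReal.ofReal (‖y‖ ^ β) ∂μ := by
        exact lintegral_congr (fun y => hcong y)
  _ = ∑' n : ℕ, ∫⁻ y in pSph p (g n), ENNReal.ofReal (‖y‖ ^ β) ∂μ := by
        rw [hS, lintegral_iUnion (fun n => measurableSet_pSph _) (pairwise_disjoint_sph g hg)]
  _ ≤ ∑' n : ℕ, ENNReal.ofReal (r ^ (n+1:ℕ)) := by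
        refine ENNReal.tsum_le_tsum (fun n => ?_)
        rw [lintegral_rpow_pSph μ hμ]
        exact ENNReal.ofReal_le_ofReal ((rpow_term_bound β (g n)).trans (hbound n))
  _ < ⊤ := tsum_ofReal_geom_lt_top hr0 hr1

lemma setBig_eq : {y : ℚ_[p] | 1 < ‖y‖} = ⋃ n : ℕ, pSph p (n+1) := by
  ext y
  simp only [Set.mem_setOf_eq, Set.mem_iUnion, pSph]
  constructor
  · intro hy
    have hy0 : y ≠ 0 := by
      intro h
      rw [h, norm_zero] at hy
      linarith
    obtain ⟨j, hj⟩ := norm_eq_zpow_of_ne_zero hy0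
    have hjpos : 0 < j := by
      by_contra h
      push_neg at h
      rw [hj] at hy
      have : (p:ℝ)^j ≤ (p:ℝ)^(0:ℤ) := zpow_le_zpow_right₀ (one_lt_p (p:=p)).le h
      simp only [zpow_zero] at this
      linarith
    exact ⟨(j-1).toNat, by rw [hj]; congr 1; omega⟩
  · rintro ⟨n, hn⟩
    rw [hn]
    calc (1:ℝ) = (p:ℝ)^(0:ℤ) := by simp
    _ < (p:ℝ)^((n:ℤ)+1) := zpow_lt_zpow_right₀ (one_lt_p (p:=p)) (by omega)

lemma integrableOn_rpow_small (hμ : μ (closedBall (0:ℚ_[p]) 1) = 1) {β : ℝ} (hβ : -1 < β) :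
    IntegrableOn (fun y : ℚ_[p] => ‖y‖ ^ β) (pBall (0:ℚ_[p]) (-1)) μ := by
  constructor
  · exact (measurable_norm.pow_const β).aestronglyMeasurable
  · have hsplit : pBall (0:ℚ_[p]) (-1) = {0} ∪ ⋃ n : ℕ, pSph p (-1 - n) := pBall_zero_eq _
    rw [HasFiniteIntegral, hsplit]
    rw [Measure.restrict_union (disjoint_zero_sph _)
      (MeasurableSet.iUnion fun n => measurableSet_pSph _), lintegral_add_measure]
    have h0 : ∫⁻ y in ({0} : Set ℚ_[p]), ‖‖y‖ ^ β‖ₑ ∂μ = 0 :=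
      setLIntegral_measure_zero _ _ (mu_singleton_zero μ hμ)
    rw [h0, zero_add]
    have := hasFiniteIntegral_of_sph_sum μ (fun n => -1 - n)
      (fun a b h => by have h' : (-1 - (a:ℤ)) = (-1 - (b:ℤ)) := h; omega)
      rfl (β := β) (r := (p:ℝ) ^ (-(β+1))) (Real.rpow_nonneg (p_pos (p:=p)).le _)
      (Real.rpow_lt_one_of_one_lt_of_neg (one_lt_p (p:=p)) (by linarith)) ?_ hμ
    · exact this
    · intro n
      rw [rpow_zpow_eq]
      rw [← Real.rpow_natCast ((p:ℝ) ^ (-(β+1))) (n+1), ← Real.rpow_mul (p_pos (p:=p)).le]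
      refine le_of_eq ?_
      congr 1
      push_cast
      ring

lemma integrableOn_rpow_big (hμ : μ (closedBall (0:ℚ_[p]) 1) = 1) {β : ℝ} (hβ : β < -1) :
    IntegrableOn (fun y : ℚ_[p] => ‖y‖ ^ β) {y : ℚ_[p] | 1 < ‖y‖} μ := by
  constructor
  · exact (measurable_norm.pow_const β).aestronglyMeasurable
  · refine hasFiniteIntegral_of_sph_sum μ (fun n => (n:ℤ)+1)
      (fun a b h => by have h' : ((a:ℤ)+1) = ((b:ℤ)+1) := h; omega)
      setBig_eq (β := β) (r := (p:ℝ) ^ (β+1)) (Real.rpow_nonneg (p_pos (p:=p)).le _)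
      (Real.rpow_lt_one_of_one_lt_of_neg (one_lt_p (p:=p)) (by linarith)) ?_ hμ
    intro n
    rw [rpow_zpow_eq]
    rw [← Real.rpow_natCast ((p:ℝ) ^ (β+1)) (n+1), ← Real.rpow_mul (p_pos (p:=p)).le]
    refine le_of_eq ?_
    congr 1
    push_cast
    ring


/-! ### the auxiliary radial function -/

section Mfun

/-- the function `‖1-t‖^(-α-1) (‖t‖^(α-1) - 1)` -/
noncomputable def mfun (p : ℕ) [Fact p.Prime] (α : ℝ) : ℚ_[p] → ℝ :=
  fun t => ‖1 - t‖ ^ (-α-1) * (‖t‖ ^ (α-1) - 1)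

noncomputable def mminus (p : ℕ) [Fact p.Prime] (α : ℝ) : ℚ_[p] → ℝ :=
  fun t => if ‖t‖ < 1 then ‖t‖ ^ (α-1) - 1 else 0

noncomputable def mplus (p : ℕ) [Fact p.Prime] (α : ℝ) : ℚ_[p] → ℝ :=
  fun t => if 1 < ‖t‖ then ‖t‖ ^ (-(2:ℝ)) - ‖t‖ ^ (-α-1) else 0

lemma norm_one_sub_of_lt {t : ℚ_[p]} (ht : ‖t‖ < 1) : ‖1 - t‖ = 1 := by
  have h := norm_eq_of_sub_le (y := 1 - t) (c := (1:ℚ_[p])) one_ne_zero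
    (by simpa using ht)
  simpa using h

lemma norm_one_sub_of_gt {t : ℚ_[p]} (ht : 1 < ‖t‖) : ‖1 - t‖ = ‖t‖ := by
  have htne : (-t : ℚ_[p]) ≠ 0 := by
    intro h
    have : t = 0 := by simpa using h
    rw [this, norm_zero] at ht
    linarith
  have h := norm_eq_of_sub_le (y := 1 - t) (c := (-t:ℚ_[p])) htne
    (by simpa using ht)
  simpa using h

lemma mfun_split (α : ℝ) (t : ℚ_[p]) : mfun p α t = mminus p α t + mplus p α t := by
  simp only [mfun, mminus, mplus]
  rcases lt_trichotomy ‖t‖ 1 with ht | ht | ht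
  · rw [if_pos ht, if_neg (not_lt.mpr (by linarith)), add_zero, norm_one_sub_of_lt ht,
      Real.one_rpow, one_mul]
  · rw [if_neg (not_lt.mpr (by linarith)), if_neg (not_lt.mpr (by linarith)), ht, Real.one_rpow,
      sub_self, mul_zero, add_zero]
  · have htpos : (0:ℝ) < ‖t‖ := lt_trans one_pos ht
    rw [if_neg (not_lt.mpr (by linarith)), if_pos ht, zero_add, norm_one_sub_of_gt ht, mul_sub,
      mul_one, ← Real.rpow_add htpos]
    congr 2
    ring

lemma measurable_mminus (α : ℝ) :
    Measurable (mminus p α) := by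
  refine Measurable.ite ?_ ((measurable_norm.pow_const _).sub measurable_const) measurable_const
  exact measurableSet_lt measurable_norm measurable_const

lemma measurable_mplus (α : ℝ) :
    Measurable (mplus p α) := by
  refine Measurable.ite ?_ ((measurable_norm.pow_const _).sub (measurable_norm.pow_const _))
    measurable_const
  exact measurableSet_lt measurable_const measurable_norm

lemma measurable_mfun (α : ℝ) :
    Measurable (mfun p α) :=
  ((measurable_const.sub measurable_id).norm.pow_const _).mul
    ((measurable_norm.pow_const _).sub measurable_const)

lemma setSmall_eq : {t : ℚ_[p] | ‖t‖ < 1} = pBall (0:ℚ_[p]) (-1) := by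
  ext t
  simp only [Set.mem_setOf_eq, pBall_mem_iff, sub_zero]
  constructor
  · intro ht
    by_cases ht0 : t = 0
    · rw [ht0, norm_zero]
      positivity
    · obtain ⟨j, hj⟩ := norm_eq_zpow_of_ne_zero ht0
      rw [hj] at ht ⊢
      have : j < 0 := by
        by_contra h
        push_neg at h
        have : (p:ℝ)^(0:ℤ) ≤ (p:ℝ)^j := zpow_le_zpow_right₀ (one_lt_p (p:=p)).le h
        simp only [zpow_zero] at this
        linarith
      exact zpow_le_zpow_right₀ (one_lt_p (p:=p)).le (by omega)
  · intro ht
    refine lt_of_le_of_lt ht ?_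
    calc (p:ℝ)^(-1:ℤ) < (p:ℝ)^(0:ℤ) := zpow_lt_zpow_right₀ (one_lt_p (p:=p)) (by omega)
    _ = 1 := zpow_zero _

lemma integrable_mminus (hμ : μ (closedBall (0:ℚ_[p]) 1) = 1) {α : ℝ} (hα : 0 < α) :
    Integrable (mminus p α) μ := by
  have heq : mminus p α = Set.indicator (pBall (0:ℚ_[p]) (-1))
      (fun t => ‖t‖ ^ (α-1) - 1) := by
    funext t
    classical
    rw [mminus, Set.indicator_apply]
    have hiff : (‖t‖ < 1) ↔ t ∈ pBall (0:ℚ_[p]) (-1) := by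
      rw [← setSmall_eq]
      exact Iff.rfl
    exact if_congr hiff rfl rfl
  rw [heq, integrable_indicator_iff (measurableSet_pBall _ _)]
  refine Integrable.sub (integrableOn_rpow_small μ hμ (by linarith)) ?_
  refine (integrableOn_const_iff).mpr (Or.inr ?_)
  rw [mu_pBall' μ hμ]
  exact ENNReal.ofReal_lt_top

lemma integrable_mplus (hμ : μ (closedBall (0:ℚ_[p]) 1) = 1) {α : ℝ} (hα : 0 < α) :
    Integrable (mplus p α) μ := by
  have heq : mplus p α = Set.indicator {t : ℚ_[p] | 1 < ‖t‖}
      (fun t => ‖t‖ ^ (-(2:ℝ)) - ‖t‖ ^ (-α-1)) := by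
    funext t
    classical
    rw [mplus, Set.indicator_apply]
    exact if_congr Iff.rfl rfl rfl
  have hmeas : MeasurableSet {t : ℚ_[p] | 1 < ‖t‖} :=
    measurableSet_lt measurable_const measurable_norm
  rw [heq, integrable_indicator_iff hmeas]
  exact (integrableOn_rpow_big μ hμ (by norm_num)).sub
    (integrableOn_rpow_big μ hμ (by linarith))

lemma integrable_mfun (hμ : μ (closedBall (0:ℚ_[p]) 1) = 1) {α : ℝ} (hα : 0 < α) :
    Integrable (mfun p α) μ := by
  have : mfun p α = fun t => mminus p α t + mplus p α t := funext (mfun_split α)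
  rw [this]
  exact (integrable_mminus μ hμ hα).add (integrable_mplus μ hμ hα)

lemma integral_mfun_zero (hμ : μ (closedBall (0:ℚ_[p]) 1) = 1) {α : ℝ} (hα : 0 < α) :
    ∫ t, mfun p α t ∂μ = 0 := by
  have hsplit : ∫ t, mfun p α t ∂μ = (∫ t, mminus p α t ∂μ) + ∫ t, mplus p α t ∂μ := by
    rw [← integral_add (integrable_mminus μ hμ hα) (integrable_mplus μ hμ hα)]
    exact integral_congr_ae (Filter.Eventually.of_forall (fun t => mfun_split α t))
  have hae0 : ∀ᵐ w ∂μ, w ≠ (0:ℚ_[p]) := by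
    rw [ae_iff]
    convert mu_singleton_zero μ hμ using 2
    ext w
    simp
  have hkey : ∫ t, mplus p α t ∂μ = - ∫ t, mminus p α t ∂μ := by
    rw [integral_inv_change μ hμ (measurable_mplus α).aestronglyMeasurable]
    rw [← integral_neg]
    refine integral_congr_ae ?_
    filter_upwards [hae0] with w hw0
    have hwpos : (0:ℝ) < ‖w‖ := norm_pos_iff.mpr hw0
    rcases lt_trichotomy ‖w‖ 1 with hw | hw | hw
    · have hinv : 1 < ‖w⁻¹‖ := by
        rw [norm_inv]
        exact (one_lt_inv₀ hwpos).mpr hw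
      have e1 : (‖w‖⁻¹ : ℝ) ^ (-(2:ℝ)) = ‖w‖ ^ ((2:ℝ)) := by
        rw [Real.inv_rpow hwpos.le, ← Real.rpow_neg hwpos.le]
        norm_num
      have e2 : (‖w‖⁻¹ : ℝ) ^ (-α-1) = ‖w‖ ^ (α+1) := by
        rw [Real.inv_rpow hwpos.le, ← Real.rpow_neg hwpos.le]
        ring_nf
      have e3 : ((‖w‖ : ℝ)^(2:ℕ))⁻¹ = ‖w‖ ^ (-(2:ℝ)) := by
        rw [← Real.rpow_natCast ‖w‖ 2, ← Real.rpow_neg hwpos.le]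
        norm_num
      rw [NNReal.smul_def, rho_coe, mplus, mminus, if_pos hinv, if_pos hw, smul_eq_mul, norm_inv,
        e1, e2, e3, mul_sub, ← Real.rpow_add hwpos, ← Real.rpow_add hwpos,
        show (-(2:ℝ)) + 2 = 0 by ring, show (-(2:ℝ)) + (α+1) = α-1 by ring, Real.rpow_zero]
      ring
    · have hinv : ‖w⁻¹‖ = 1 := by rw [norm_inv, hw, inv_one]
      rw [NNReal.smul_def, mplus, mminus, if_neg (by rw [hinv]; exact lt_irrefl 1),
        if_neg (by rw [hw]; exact lt_irrefl 1), smul_zero, neg_zero]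
    · have hinv : ‖w⁻¹‖ < 1 := by
        rw [norm_inv]
        exact inv_lt_one_of_one_lt₀ hw
      rw [NNReal.smul_def, mplus, mminus, if_neg (not_lt.mpr hinv.le),
        if_neg (not_lt.mpr hw.le), smul_zero, neg_zero]
  rw [hsplit, hkey]
  ring

end Mfun

end KelvinAux

open KelvinAux in
/-- The Kelvin transform preserves `α`-harmonicity: let `u` be sufficiently
regular on `ℚ_p` (locally constant with compact support and zero mean) and
`α`-harmonic on an open set `G ⊆ ℚ_p \ {0}`, i.e. `(D^α u)(x) = 0` on `G`, where
`(D^α u)(x) = ((1 - p^α)/(1 - p^{-α-1})) ∫ (u(x) - u(y))/|x-y|^{α+1} dy`.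
Then the Kelvin transform `(Ku)(x) = |x|^(α-1) u(1/x)` (extended by `0` at `0`)
is `α`-harmonic on the inverted set `G* = {1/x : x ∈ G}`. -/
theorem padic_kelvin_preserves_alpha_harmonicity {p : ℕ} [Fact p.Prime]
    [MeasurableSpace ℚ_[p]] [BorelSpace ℚ_[p]]
    (μ : Measure ℚ_[p]) [μ.IsAddHaarMeasure]
    (hμ : μ (Metric.closedBall (0 : ℚ_[p]) 1) = 1)
    (α : ℝ) (hα : 0 < α) (hα1 : α ≠ 1)
    (u : ℚ_[p] → ℂ)
    (hlc : ∃ k : ℤ, ∀ x x' : ℚ_[p], ‖x'‖ ≤ (p : ℝ) ^ (-k) → u (x + x') = u x)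
    (hcs : HasCompactSupport u)
    (hmean : ∫ x, u x ∂μ = 0)
    (G : Set ℚ_[p]) (hGopen : IsOpen G) (hG0 : (0 : ℚ_[p]) ∉ G)
    (hharm : ∀ x ∈ G,
      ((1 - (p : ℝ) ^ α) / (1 - (p : ℝ) ^ (-α - 1))) •
        ∫ y, ((‖x - y‖ ^ (α + 1) : ℝ))⁻¹ • (u x - u y) ∂μ = 0)
    (Ku : ℚ_[p] → ℂ)
    (hKu0 : Ku 0 = 0)
    (hKu : ∀ y : ℚ_[p], y ≠ 0 → Ku y = (‖y‖ ^ (α - 1) : ℝ) • u y⁻¹) :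
    ∀ x ∈ (fun z : ℚ_[p] => z⁻¹) '' G,
      ((1 - (p : ℝ) ^ α) / (1 - (p : ℝ) ^ (-α - 1))) •
        ∫ y, ((‖x - y‖ ^ (α + 1) : ℝ))⁻¹ • (Ku x - Ku y) ∂μ = 0 := by
  classical
  intro x hx
  obtain ⟨z, hzG, hzx⟩ := hx
  have hzx' : z⁻¹ = x := hzx
  subst hzx'
  have hz0 : z ≠ 0 := fun h => hG0 (h ▸ hzG)
  have hx0 : z⁻¹ ≠ 0 := inv_ne_zero hz0
  have haz : (0:ℝ) < ‖z‖ := norm_pos_iff.mpr hz0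
  -- continuity and measurability of `u` and `Ku`
  have hu_cont : Continuous u := by
    obtain ⟨k, hk⟩ := hlc
    rw [continuous_iff_continuousAt]
    intro x0
    have hev : ∀ᶠ y in nhds x0, u y = u x0 := by
      refine Filter.eventually_of_mem
        (Metric.closedBall_mem_nhds x0 (zpow_pos (p_pos (p:=p)) (-k))) ?_
      intro y hy
      have h2 := hk x0 (y - x0) (by rwa [Metric.mem_closedBall, dist_eq_norm] at hy)
      simpa using h2
    exact continuousAt_const.congr (hev.mono fun y hy => hy.symm)
  have hu_meas : Measurable u := hu_cont.measurable
  have hKu_meas : Measurable Ku := by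
    have hKufun : Ku = fun y => if y = 0 then 0 else ((‖y‖ ^ (α-1) : ℝ)) • u y⁻¹ := by
      funext y
      by_cases hy : y = 0
      · rw [if_pos hy, hy, hKu0]
      · rw [if_neg hy, hKu y hy]
    rw [hKufun]
    exact Measurable.ite measurableSet_eq measurable_const
      ((measurable_norm.pow_const _).smul (hu_meas.comp measurable_inv))
  have hC0 : (1 - (p:ℝ)^α) / (1 - (p:ℝ)^(-α-1)) ≠ 0 := by
    have h1 : 1 < (p:ℝ)^α :=
      (Real.one_lt_rpow_iff_of_pos (p_pos (p:=p))).mpr (Or.inl ⟨one_lt_p (p:=p), hα⟩)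
    have h2 : (p:ℝ)^(-α-1) < 1 :=
      Real.rpow_lt_one_of_one_lt_of_neg (one_lt_p (p:=p)) (by linarith)
    exact div_ne_zero (sub_ne_zero.mpr h1.ne) (sub_ne_zero.mpr h2.ne')
  have hae0 : ∀ᵐ w ∂μ, w ≠ (0:ℚ_[p]) := by
    rw [ae_iff]
    convert mu_singleton_zero μ hμ using 2
    ext w
    simp
  -- the main function
  set F : ℚ_[p] → ℂ := fun y => ((‖z⁻¹ - y‖ ^ (α + 1) : ℝ))⁻¹ • (Ku z⁻¹ - Ku y) with hFdef
  have hF_meas : Measurable F :=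
    (((measurable_const.sub measurable_id).norm.pow_const _).inv).smul
      (measurable_const.sub hKu_meas)
  have step1 : ∫ y, F y ∂μ = ∫ w, (rho p w : ℝ≥0) • F w⁻¹ ∂μ :=
    integral_inv_change μ hμ hF_meas.aestronglyMeasurable
  -- the auxiliary real function g₂
  set g₂ : ℚ_[p] → ℝ := fun w => ‖z - w‖ ^ (-α-1) * (‖w‖ ^ (α-1) - ‖z‖ ^ (α-1)) with hg2def
  have hg₂eq : ∀ w, g₂ w = ‖z‖ ^ (-(2:ℝ)) * mfun p α (z⁻¹ * w) := by
    intro w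
    have h1 : (1:ℚ_[p]) - z⁻¹ * w = z⁻¹ * (z - w) := by
      field_simp
    simp only [hg2def, mfun, h1, norm_mul, norm_inv]
    set a := ‖z‖ with hadef
    set b := ‖w‖ with hbdef
    set dd := ‖z - w‖ with hddef
    have hd0 : 0 ≤ dd := norm_nonneg _
    have hb0 : 0 ≤ b := norm_nonneg _
    set P := a ^ α with hPdef
    have hP : 0 < P := Real.rpow_pos_of_pos haz α
    have ea0 : a ^ (-(2:ℝ)) = (a * a)⁻¹ := by
      rw [show (-(2:ℝ)) = -(((2:ℕ)):ℝ) by norm_num, Real.rpow_neg haz.le, Real.rpow_natCast,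
        pow_two]
    have ea2 : a ^ (α-1) = P / a := by
      rw [Real.rpow_sub haz, Real.rpow_one, hPdef]
    have ea3 : a ^ (1-α) = a / P := by
      rw [Real.rpow_sub haz, Real.rpow_one, hPdef]
    have r2 : (a⁻¹ : ℝ) ^ (-α-1) = P * a := by
      rw [Real.inv_rpow haz.le, ← Real.rpow_neg haz.le, show -(-α-1) = α+1 by ring,
        hPdef, Real.rpow_add haz, Real.rpow_one]
    have r4 : (a⁻¹ : ℝ) ^ (α-1) = a / P := by
      rw [Real.inv_rpow haz.le, ← Real.rpow_neg haz.le, show -(α-1) = 1-α by ring, ea3]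
    rw [Real.mul_rpow (inv_nonneg.mpr haz.le) hd0, Real.mul_rpow (inv_nonneg.mpr haz.le) hb0,
      r2, r4, ea0, ea2]
    field_simp
  have hg₂meas : Measurable g₂ :=
    ((measurable_const.sub measurable_id).norm.pow_const _).mul
      ((measurable_norm.pow_const _).sub measurable_const)
  have hg₂int : Integrable g₂ μ := by
    have h1 : Integrable (fun w => mfun p α (z⁻¹ * w)) μ :=
      integrable_scale μ hμ (inv_ne_zero hz0) (measurable_mfun α).aestronglyMeasurable
        (integrable_mfun μ hμ hα)
    have h2 := h1.const_mul (‖z‖ ^ (-(2:ℝ)))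
    exact h2.congr (Filter.Eventually.of_forall fun w => (hg₂eq w).symm)
  have hg₂zero : ∫ w, g₂ w ∂μ = 0 := by
    calc ∫ w, g₂ w ∂μ = ∫ w, ‖z‖ ^ (-(2:ℝ)) * mfun p α (z⁻¹ * w) ∂μ :=
          integral_congr_ae (Filter.Eventually.of_forall fun w => hg₂eq w)
    _ = ‖z‖ ^ (-(2:ℝ)) * ∫ w, mfun p α (z⁻¹ * w) ∂μ := integral_const_mul _ _
    _ = 0 := by
        rw [integral_scale μ hμ (inv_ne_zero hz0) (measurable_mfun α).aestronglyMeasurable,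
          integral_mfun_zero μ hμ hα]
        simp
  -- the pieces of the transformed integrand
  set cu : ℂ := (‖z‖ ^ (1-α) : ℝ) • u z with hcudef
  set G1 : ℚ_[p] → ℂ := fun w => ((‖z - w‖ ^ (α+1) : ℝ))⁻¹ • (u z - u w) with hG1def
  set c₁ : ℝ := ‖z‖ ^ (α+1) with hc1def
  have hc₁0 : c₁ ≠ 0 := (Real.rpow_pos_of_pos haz _).ne'
  set H : ℚ_[p] → ℂ := fun w => c₁ • (G1 w + (g₂ w) • cu) with hHdef
  -- the key pointwise identity
  have hae : ∀ w : ℚ_[p], w ≠ 0 → (rho p w : ℝ≥0) • F w⁻¹ = H w := by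
    intro w hw0
    have hbz : (0:ℝ) < ‖w‖ := norm_pos_iff.mpr hw0
    have hKuz : Ku z⁻¹ = ((‖z‖⁻¹ ^ (α-1) : ℝ)) • u z := by
      rw [hKu z⁻¹ hx0, inv_inv, norm_inv]
    have hKuw : Ku w⁻¹ = ((‖w‖⁻¹ ^ (α-1) : ℝ)) • u w := by
      rw [hKu w⁻¹ (inv_ne_zero hw0), inv_inv, norm_inv]
    have hker : ‖z⁻¹ - w⁻¹‖ = ‖z‖⁻¹ * ‖w‖⁻¹ * ‖z - w‖ := norm_inv_sub_inv hz0 hw0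
    rw [NNReal.smul_def, rho_coe]
    simp only [hFdef, hHdef, hG1def, hg2def, hcudef, hker, hKuz, hKuw]
    set a := ‖z‖ with hadef
    set b := ‖w‖ with hbdef
    set dd := ‖z - w‖ with hddef
    have hd0 : 0 ≤ dd := norm_nonneg _
    set P := a ^ α with hPdef
    set Q := b ^ α with hQdef
    have hP : 0 < P := Real.rpow_pos_of_pos haz α
    have hQ : 0 < Q := Real.rpow_pos_of_pos hbz α
    have ea1 : a ^ (α+1) = P * a := by
      rw [hPdef, Real.rpow_add haz, Real.rpow_one]
    have eb1 : b ^ (α+1) = Q * b := by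
      rw [hQdef, Real.rpow_add hbz, Real.rpow_one]
    have ea2 : a ^ (α-1) = P / a := by
      rw [Real.rpow_sub haz, Real.rpow_one, hPdef]
    have eb2 : b ^ (α-1) = Q / b := by
      rw [Real.rpow_sub hbz, Real.rpow_one, hQdef]
    have eia : (a⁻¹ : ℝ) ^ (α-1) = (P / a)⁻¹ := by
      rw [Real.inv_rpow haz.le, ea2]
    have eib : (b⁻¹ : ℝ) ^ (α-1) = (Q / b)⁻¹ := by
      rw [Real.inv_rpow hbz.le, eb2]
    have ea3 : a ^ (1-α) = a / P := by
      rw [Real.rpow_sub haz, Real.rpow_one, hPdef]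
    have eker : ((a⁻¹ * b⁻¹ * dd) ^ (α+1) : ℝ)⁻¹ = (P*a) * (Q*b) * ((dd^(α+1) : ℝ))⁻¹ := by
      rw [Real.mul_rpow (by positivity) hd0, Real.mul_rpow (by positivity) (by positivity),
        Real.inv_rpow haz.le, Real.inv_rpow hbz.le, mul_inv, mul_inv, inv_inv, inv_inv,
        ea1, eb1]
    have ed : dd ^ (-α-1) = ((dd ^ (α+1) : ℝ))⁻¹ := by
      rw [show -α-1 = -(α+1) by ring, Real.rpow_neg hd0]
    rw [eker, eia, eib, ea3, ea2, eb2, ed]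
    set D := ((dd ^ (α+1) : ℝ))⁻¹ with hDdef
    match_scalars
    · rw [hc1def, ea1]
      field_simp
      ring
    · rw [hc1def, ea1]
      field_simp
  -- conclusion
  have hzero : ∫ y, F y ∂μ = 0 := by
    rw [step1]
    by_cases hInt : Integrable (fun w => (rho p w : ℝ≥0) • F w⁻¹) μ
    · have haeae : (fun w => (rho p w : ℝ≥0) • F w⁻¹) =ᵐ[μ] H := by
        filter_upwards [hae0] with w hw using hae w hw
      have hHint : Integrable H μ := hInt.congr haeae
      have hsum : Integrable (fun w => G1 w + (g₂ w) • cu) μ := by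
        have h2 : Integrable (fun w => c₁ • (G1 w + (g₂ w) • cu)) μ := hHint
        exact (integrable_smul_iff hc₁0 _).mp h2
      have hG2int : Integrable (fun w => (g₂ w) • cu) μ := hg₂int.smul_const cu
      have hG1int : Integrable G1 μ := by
        have h3 := hsum.sub hG2int
        refine h3.congr (Filter.Eventually.of_forall fun w => ?_)
        simp
      have hJ : ∫ w, G1 w ∂μ = 0 := by
        have h3 := hharm z hzG
        rcases smul_eq_zero.mp h3 with h | h
        · exact absurd h hC0
        · exact h
      have hG2 : ∫ w, (g₂ w) • cu ∂μ = 0 := by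
        rw [integral_smul_const, hg₂zero, zero_smul]
      calc ∫ w, (rho p w : ℝ≥0) • F w⁻¹ ∂μ = ∫ w, H w ∂μ := integral_congr_ae haeae
      _ = c₁ • ∫ w, (G1 w + (g₂ w) • cu) ∂μ := integral_smul _ _
      _ = c₁ • ((∫ w, G1 w ∂μ) + ∫ w, (g₂ w) • cu ∂μ) := by
            rw [integral_add hG1int hG2int]
      _ = 0 := by rw [hJ, hG2, add_zero, smul_zero]
    · exact integral_undef hInt
  rw [hzero, smul_zero]
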